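/- Let b>0 and α∈(1,2). Then there exist ε₀ ∈ (0, π/2) and a constant κ > 0 (depending only on b, α and ε₀) such that for all θ ∈ [π/2 − ε₀, π/2 + ε₀] and all ρ ≥ 2, Re( ∫₀^1 (ρ−1) e^{iθ} · ( 1 + ((1−r)e^{iθ} + rρe^{iθ})^{α−1}/(αb) )^{−1} dr ) ≥ κ (ρ^{2−α} − 1); that is, the real part of the contour integral of z ↦ (1 + z^{α−1}/(αb))^{−1} along the straight segment from e^{iθ} to ρ e^{iθ} is at least κ(ρ^{2−α} − 1). -/

import Mathlib

open Real

lemma aux_cpow (s t θ : ℝ) (hs : 0 < s) (h1 : -π < θ) (h2 : θ ≤ π) :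
    ((s : ℂ) * Complex.exp ((θ:ℂ) * Complex.I)) ^ ((t:ℂ))
      = ((s ^ t : ℝ) : ℂ) * Complex.exp (((t*θ : ℝ):ℂ) * Complex.I) := by
  have hz : (s:ℂ) * Complex.exp ((θ:ℂ)*Complex.I)
      = Complex.exp (((Real.log s : ℝ):ℂ) + (θ:ℂ)*Complex.I) := by
    rw [Complex.exp_add, ← Complex.ofReal_exp, Real.exp_log hs]
  rw [hz, Complex.cpow_def_of_ne_zero (Complex.exp_ne_zero _),
    Complex.log_exp (by simpa using h1) (by simpa using h2)]
  rw [add_mul, Complex.exp_add, Real.rpow_def_of_pos hs, Complex.ofReal_exp,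
    Complex.ofReal_mul]
  ring_nf
  push_cast
  ring_nf

lemma aux_re (t u θ β : ℝ) :
    (((t:ℂ)) * Complex.exp ((θ:ℂ)*Complex.I) * (1 + (u:ℂ) * Complex.exp ((β:ℂ)*Complex.I))⁻¹).re
      = t * (cos θ + u * cos (θ-β)) / (1 + 2*u*cos β + u^2) := by
  have hN : Complex.normSq (1 + (u:ℂ) * Complex.exp ((β:ℂ)*Complex.I))
      = 1 + 2*u*cos β + u^2 := by
    simp [Complex.normSq_apply, Complex.add_re, Complex.add_im, Complex.mul_re, Complex.mul_im,
      Complex.exp_ofReal_mul_I_re, Complex.exp_ofReal_mul_I_im]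
    nlinarith [sin_sq_add_cos_sq β]
  simp [Complex.mul_re, Complex.mul_im, Complex.inv_re, Complex.inv_im, hN,
    Complex.add_re, Complex.add_im, Complex.exp_ofReal_mul_I_re, Complex.exp_ofReal_mul_I_im,
    Real.cos_sub]
  ring

lemma aux_poly (δ P v : ℝ) (hδ : 0 < δ) (hP : 0 < P) (hv : 1 ≤ v) :
    δ*P/(2*(1+P)^2*v) ≤ v*δ*P/(2*(P+v)^2) := by
  rw [div_le_div_iff₀ (mul_pos (by positivity) (by linarith))
    (mul_pos two_pos (pow_pos (by linarith) 2))]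
  nlinarith [mul_nonneg (mul_nonneg (mul_nonneg (mul_nonneg hδ.le hP.le) hP.le)
    (sub_nonneg.2 hv)) (show (0:ℝ) ≤ 2*v+v*P+P by nlinarith)]

lemma aux_frac (δ P v : ℝ) (hδ : 0 < δ) (hP : 0 < P) (hv : 1 ≤ v) :
    v/P * δ/2/(1+v/P)^2 = v*δ*P/(2*(P+v)^2) := by
  have hPv : (0:ℝ) < P + v := by linarith
  field_simp

set_option maxHeartbeats 1000000 in
theorem stmt_14 (b α : ℝ) (hb : 0 < b) (hα : 1 < α) (hα2 : α < 2) :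
    ∃ ε₀ : ℝ, 0 < ε₀ ∧ ε₀ < π / 2 ∧ ∃ κ : ℝ, 0 < κ ∧
      ∀ θ ρ : ℝ, π / 2 - ε₀ ≤ θ → θ ≤ π / 2 + ε₀ → 2 ≤ ρ →
        κ * (ρ ^ (2 - α) - 1) ≤
          (∫ r in (0:ℝ)..1,
            ((ρ : ℂ) - 1) * Complex.exp ((θ : ℂ) * Complex.I) *
              (1 + (((1 - r : ℝ) : ℂ) * Complex.exp ((θ : ℂ) * Complex.I) +
                  (r : ℂ) * (ρ : ℂ) * Complex.exp ((θ : ℂ) * Complex.I)) ^ ((α : ℂ) - 1) /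
                ((α : ℂ) * (b : ℂ)))⁻¹).re := by
  have hπ := Real.pi_pos
  set P := α * b with hP_def
  have hP : 0 < P := by positivity
  set δ := Real.sin ((α-1)*(π/4)) with hδ_def
  have hδ : 0 < δ := by
    apply Real.sin_pos_of_pos_of_lt_pi <;> nlinarith
  set ε₀ := min ((α-1)*(π/4)) (min ((2-α)*(π/4)) (min (δ/(2*P)) (π/4))) with hε_def
  have hε_pos : 0 < ε₀ := by
    apply lt_min (by nlinarith)
    apply lt_min (by nlinarith)
    exact lt_min (by positivity) (by positivity)
  have hε1 : ε₀ ≤ (α-1)*(π/4) := min_le_left _ _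
  have hε2 : ε₀ ≤ (2-α)*(π/4) := le_trans (min_le_right _ _) (min_le_left _ _)
  have hε3 : ε₀ ≤ δ/(2*P) := le_trans (min_le_right _ _) (le_trans (min_le_right _ _) (min_le_left _ _))
  have hε4 : ε₀ ≤ π/4 := le_trans (min_le_right _ _) (le_trans (min_le_right _ _) (min_le_right _ _))
  refine ⟨ε₀, hε_pos, by linarith, ?_⟩
  set K := δ * P / (2*(1+P)^2) with hK_def
  have hK : 0 < K := by
    apply div_pos (mul_pos hδ hP) (by positivity)
  refine ⟨K / (2-α), div_pos hK (by linarith), ?_⟩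
  intro θ ρ hθ1 hθ2 hρ
  -- basic angle facts
  have hθpos : 0 < θ := by linarith
  have hθltπ : θ < π := by linarith
  have hcosθ : -ε₀ ≤ Real.cos θ := by
    have h1 : Real.cos (π/2 + ε₀) ≤ Real.cos θ :=
      Real.cos_le_cos_of_nonneg_of_le_pi hθpos.le (by linarith) hθ2
    have h2 : Real.cos (π/2 + ε₀) = -Real.sin ε₀ := by
      rw [Real.cos_add]; simp
    have h3 : Real.sin ε₀ ≤ ε₀ := Real.sin_le hε_pos.le
    linarith
  set β := (α-1)*θ with hβ_def
  have hβ0 : 0 ≤ β := mul_nonneg (by linarith) hθpos.le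
  have hβπ2 : β ≤ π/2 := by
    have h1 : β ≤ (α-1)*(π/2+ε₀) := by
      rw [hβ_def]
      nlinarith
    nlinarith [mul_nonneg (by linarith : (0:ℝ) ≤ 2-α) hε_pos.le]
  have hcosβ0 : 0 ≤ Real.cos β := Real.cos_nonneg_of_mem_Icc ⟨by linarith, hβπ2⟩
  have hcosβ1 : Real.cos β ≤ 1 := Real.cos_le_one β
  have hγδ : δ ≤ Real.cos ((2-α)*θ) := by
    have hA : (2-α)*θ ≤ π/2 - (α-1)*(π/4) := by
      nlinarith [mul_nonneg (by linarith : (0:ℝ) ≤ α-1) hε_pos.le]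
    have h1 : Real.cos (π/2 - (α-1)*(π/4)) ≤ Real.cos ((2-α)*θ) :=
      Real.cos_le_cos_of_nonneg_of_le_pi (by nlinarith) (by nlinarith) hA
    rwa [Real.cos_pi_div_two_sub] at h1
  -- the nice form of the integrand
  set E := Complex.exp ((θ:ℂ) * Complex.I) with hE_def
  set s : ℝ → ℝ := fun r => 1 + r*(ρ-1) with hs_def
  set u : ℝ → ℝ := fun r => s r ^ (α-1) / P with hu_def
  set h : ℝ → ℂ := fun r =>
    ((ρ-1 : ℝ):ℂ) * E * (1 + ((u r : ℝ):ℂ) * Complex.exp ((β:ℂ)*Complex.I))⁻¹ with hh_def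
  have hsmem : ∀ r ∈ Set.Icc (0:ℝ) 1, 1 ≤ s r := by
    intro r hr
    simp only [hs_def]
    nlinarith [hr.1, hr.2]
  have hEq : Set.EqOn (fun r : ℝ =>
      ((ρ : ℂ) - 1) * E *
        (1 + (((1 - r : ℝ) : ℂ) * E + (r : ℂ) * (ρ : ℂ) * E) ^ ((α : ℂ) - 1) /
          ((α : ℂ) * (b : ℂ)))⁻¹) h (Set.uIcc 0 1) := by
    rw [Set.uIcc_of_le (by norm_num : (0:ℝ) ≤ 1)]
    intro r hr
    have hs1 : (1:ℝ) ≤ s r := hsmem r hr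
    have hspos : 0 < s r := by linarith
    have hbase : (((1 - r : ℝ) : ℂ) * E + (r : ℂ) * (ρ : ℂ) * E) = ((s r : ℝ):ℂ) * E := by
      simp only [hs_def]; push_cast; ring
    have hexp : ((α:ℂ) - 1) = (((α-1 : ℝ)):ℂ) := by push_cast; ring
    have hρc : ((ρ:ℂ) - 1) = ((ρ - 1 : ℝ):ℂ) := by push_cast; ring
    have hu_cast : ((u r : ℝ):ℂ) = ((s r ^ (α-1) : ℝ):ℂ) / ((α:ℂ)*(b:ℂ)) := by
      simp only [hu_def, hP_def]; push_cast; ring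
    simp only [hh_def, hbase, hexp, hE_def]
    rw [show (((1 - r : ℝ) : ℂ) * Complex.exp ((θ:ℂ) * Complex.I) + (r : ℂ) * (ρ : ℂ) * Complex.exp ((θ:ℂ) * Complex.I)) = ((s r : ℝ):ℂ) * Complex.exp ((θ:ℂ) * Complex.I) from hbase]
    rw [aux_cpow (s r) (α-1) θ hspos (by linarith) (by linarith)]
    rw [hρc, hu_cast, ← hβ_def]
    congr 2
    ring
  -- continuity of h on Icc 0 1
  have hu_cont : ContinuousOn u (Set.Icc 0 1) := by
    apply ContinuousOn.div_const
    apply ContinuousOn.rpow_const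
    · simp only [hs_def]; fun_prop
    · intro r hr
      exact Or.inl (by nlinarith [hsmem r hr])
  have hu_nonneg : ∀ r ∈ Set.Icc (0:ℝ) 1, 0 ≤ u r := by
    intro r hr
    have h1 := hsmem r hr
    have h2 : (0:ℝ) ≤ s r ^ (α-1) := Real.rpow_nonneg (by linarith) _
    simp only [hu_def]
    positivity
  have hw_ne : ∀ r ∈ Set.Icc (0:ℝ) 1,
      (1 + ((u r : ℝ):ℂ) * Complex.exp ((β:ℂ)*Complex.I)) ≠ 0 := by
    intro r hr hzero
    have hre : (1 + ((u r : ℝ):ℂ) * Complex.exp ((β:ℂ)*Complex.I)).re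
        = 1 + u r * Real.cos β := by
      simp [Complex.add_re, Complex.mul_re, Complex.exp_ofReal_mul_I_re,
        Complex.exp_ofReal_mul_I_im]
    rw [hzero] at hre
    simp only [Complex.zero_re] at hre
    nlinarith [mul_nonneg (hu_nonneg r hr) hcosβ0]
  have hh_cont : ContinuousOn h (Set.Icc 0 1) := by
    apply ContinuousOn.mul continuousOn_const
    apply ContinuousOn.inv₀
    · exact continuousOn_const.add
        ((Complex.continuous_ofReal.comp_continuousOn hu_cont).mul continuousOn_const)
    · exact hw_ne
  have hh_int : IntervalIntegrable h MeasureTheory.volume 0 1 := by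
    apply ContinuousOn.intervalIntegrable
    rwa [Set.uIcc_of_le (by norm_num : (0:ℝ) ≤ 1)]
  -- interchange re and integral
  rw [intervalIntegral.integral_congr hEq]
  have hre_int : (∫ r in (0:ℝ)..1, h r).re = ∫ r in (0:ℝ)..1, (h r).re := by
    have := ContinuousLinearMap.intervalIntegral_comp_comm Complex.reCLM hh_int
    simpa using this.symm
  rw [hre_int]
  -- lower bound function
  set g : ℝ → ℝ := fun r => K * (ρ-1) * (s r) ^ (1-α) with hg_def
  have hg_cont : ContinuousOn g (Set.Icc 0 1) := by
    apply ContinuousOn.mul continuousOn_const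
    apply ContinuousOn.rpow_const
    · simp only [hs_def]; fun_prop
    · intro r hr
      exact Or.inl (by nlinarith [hsmem r hr])
  have hmono : ∀ r ∈ Set.Icc (0:ℝ) 1, g r ≤ (h r).re := by
    intro r hr
    have hs1 : (1:ℝ) ≤ s r := hsmem r hr
    have hspos : 0 < s r := by linarith
    have hv1 : (1:ℝ) ≤ s r ^ (α-1) := Real.one_le_rpow hs1 (by linarith)
    set v := s r ^ (α-1) with hv_def
    have hvpos : 0 < v := by linarith
    have huv : u r = v / P := rfl
    have hu0 : 0 ≤ u r := hu_nonneg r hr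
    have hu1 : 1/P ≤ u r := by
      rw [huv]; gcongr
    -- the re of h r
    have hre_eq : (h r).re
        = (ρ-1) * (cos θ + u r * cos ((2-α)*θ)) / (1 + 2*(u r)*cos β + (u r)^2) := by
      simp only [hh_def, hE_def]
      rw [aux_re (ρ-1) (u r) θ β]
      rw [show θ - β = (2-α)*θ by rw [hβ_def]; ring]
    rw [hre_eq]
    -- numerator bound
    have hδ2 : δ/(2*P) ≤ u r * δ/2 := by
      rw [div_le_iff₀ (by positivity)]
      have : u r * δ/2 * (2*P) = (u r * P) * δ := by ring
      rw [this]
      have hup : 1 ≤ u r * P := by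
        rw [huv, div_mul_cancel₀ _ (ne_of_gt hP)]
        exact hv1
      nlinarith
    have hnum : u r * δ/2 ≤ cos θ + u r * cos ((2-α)*θ) := by
      have h1 : u r * δ ≤ u r * cos ((2-α)*θ) := mul_le_mul_of_nonneg_left hγδ hu0
      linarith
    have hnum0 : 0 ≤ cos θ + u r * cos ((2-α)*θ) := by nlinarith
    have hden_pos : 0 < 1 + 2*(u r)*cos β + (u r)^2 := by
      nlinarith [mul_nonneg hu0 hcosβ0, sq_nonneg (u r)]
    have hden_le : 1 + 2*(u r)*cos β + (u r)^2 ≤ (1 + u r)^2 := by nlinarith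
    -- chain
    have step2 : u r * δ/2/(1+u r)^2
        ≤ (cos θ + u r * cos ((2-α)*θ)) / (1 + 2*(u r)*cos β + (u r)^2) :=
      div_le_div₀ hnum0 hnum hden_pos hden_le
    have e1 : K * (s r)^(1-α) = δ*P/(2*(1+P)^2*v) := by
      rw [hK_def, show (1-α) = -(α-1) by ring, Real.rpow_neg hspos.le, ← hv_def]
      field_simp
    have e2 : u r * δ/2/(1+u r)^2 = v*δ*P/(2*(P+v)^2) := by
      rw [huv]
      exact aux_frac δ P v hδ hP hv1
    have step1 : K * (s r)^(1-α) ≤ u r * δ/2/(1+u r)^2 := by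
      rw [e1, e2]
      exact aux_poly δ P v hδ hP hv1
    have hfinal : K * (s r)^(1-α)
        ≤ (cos θ + u r * cos ((2-α)*θ)) / (1 + 2*(u r)*cos β + (u r)^2) :=
      le_trans step1 step2
    calc g r = (ρ-1) * (K * (s r)^(1-α)) := by rw [hg_def]; ring
    _ ≤ (ρ-1) * ((cos θ + u r * cos ((2-α)*θ)) / (1 + 2*(u r)*cos β + (u r)^2)) :=
        mul_le_mul_of_nonneg_left hfinal (by linarith)
    _ = (ρ-1) * (cos θ + u r * cos ((2-α)*θ)) / (1 + 2*(u r)*cos β + (u r)^2) := by ring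
  -- integrate the bound
  have hg_int : IntervalIntegrable g MeasureTheory.volume 0 1 := by
    apply ContinuousOn.intervalIntegrable
    rwa [Set.uIcc_of_le (by norm_num : (0:ℝ) ≤ 1)]
  have hhre_int : IntervalIntegrable (fun r => (h r).re) MeasureTheory.volume 0 1 := by
    apply ContinuousOn.intervalIntegrable
    rw [Set.uIcc_of_le (by norm_num : (0:ℝ) ≤ 1)]
    exact Complex.continuous_re.comp_continuousOn hh_cont
  have hmono_int : ∫ r in (0:ℝ)..1, g r ≤ ∫ r in (0:ℝ)..1, (h r).re :=
    intervalIntegral.integral_mono_on (by norm_num) hg_int hhre_int hmono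
  -- compute the integral of g
  have hρ1 : (ρ:ℝ) - 1 ≠ 0 := by linarith
  have hcomp : (∫ r in (0:ℝ)..1, (s r) ^ (1-α))
      = (ρ-1)⁻¹ * ((ρ^(2-α) - 1)/(2-α)) := by
    have h1 : (fun r : ℝ => (s r) ^ (1-α)) = (fun r : ℝ => ((ρ-1)*r + 1) ^ (1-α)) := by
      funext r
      simp only [hs_def]
      congr 1
      ring
    rw [h1]
    have h2 := intervalIntegral.integral_comp_mul_add (a := (0:ℝ)) (b := 1)
      (fun x => x ^ (1-α)) hρ1 1
    rw [show (ρ-1)*0 + 1 = (1:ℝ) by ring, show (ρ-1)*1 + 1 = ρ by ring] at h2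
    rw [h2, integral_rpow (Or.inl (by linarith : (-1:ℝ) < 1-α))]
    rw [show (1-α) + 1 = 2-α by ring, Real.one_rpow]
    simp [smul_eq_mul]
  have hgval : (∫ r in (0:ℝ)..1, g r) = K/(2-α) * (ρ^(2-α) - 1) := by
    simp only [hg_def]
    rw [intervalIntegral.integral_const_mul, hcomp]
    rw [show K*(ρ-1)*((ρ-1)⁻¹*((ρ^(2-α)-1)/(2-α)))
        = K*((ρ-1)*(ρ-1)⁻¹)*((ρ^(2-α)-1)/(2-α)) from by ring,
      mul_inv_cancel₀ hρ1]
    ring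
  rw [← hgval]
  exact hmono_int
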